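/- arXiv:1903.03926 — 6 statements merged into one kernel-verified Lean document; each statement's English description precedes it below -/
import Mathlib

section
/- Let A and B be abelian categories and G : B → A an additive functor. Let X ⊆ A and Y ⊆ B be full subcategories containing the zero object, and let D_X^Y be the full subcategory of the comma category (G(B) ↓ A) consisting of objects g : G(B₀) → A₀ with B₀ ∈ Y and A₀ ∈ X. Then D_X^Y is covariantly finite in (G(B) ↓ A) if and only if X is covariantly finite in A and Y is covariantly finite in B. -/
open CategoryTheory CategoryTheory.Limits

section ApproximationDefs

variable {C : Type*} [Category C]

/-- `g : M ⟶ X` with `X ∈ P` is a left `P`-approximation of `M` if every morphism from `M`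
to an object of `P` factors through `g`. -/
def IsLeftApproximation (P : C → Prop) {M X : C} (g : M ⟶ X) : Prop :=
  P X ∧ ∀ (X' : C), P X' → ∀ h : M ⟶ X', ∃ t : X ⟶ X', g ≫ t = h

/-- A full subcategory (class of objects) `P` is covariantly finite if every object admits
a left `P`-approximation. -/
def CovariantlyFinite (P : C → Prop) : Prop :=
  ∀ M : C, ∃ (X : C) (g : M ⟶ X), IsLeftApproximation P g

end ApproximationDefs

/-- Let `A`, `B` be abelian categories, `G : B ⥤ A` an additive functor,
`X ⊆ A`, `Y ⊆ B` full subcategories containing the zero object, and `D_X^Y` the full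
subcategory of the comma category `(G(B) ↓ A)` of objects `g : G(B₀) ⟶ A₀` with
`B₀ ∈ Y`, `A₀ ∈ X`.  Then `D_X^Y` is covariantly finite in `(G(B) ↓ A)` if and only if
`X` is covariantly finite in `A` and `Y` is covariantly finite in `B`. -/
theorem covariantly_finite_comma_iff
    {A B : Type*} [Category A] [Category B] [Abelian A] [Abelian B]
    (G : B ⥤ A) [G.Additive]
    (X : A → Prop) (Y : B → Prop)
    (hX0 : ∃ Z : A, IsZero Z ∧ X Z) (hY0 : ∃ Z : B, IsZero Z ∧ Y Z) :
    CovariantlyFinite (fun Z : Comma G (𝟭 A) => Y Z.left ∧ X Z.right) ↔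
      (CovariantlyFinite X ∧ CovariantlyFinite Y) := by
  constructor
  · intro hD
    obtain ⟨ZA, hZA, hZAX⟩ := hX0
    obtain ⟨ZB, hZB, hZBY⟩ := hY0
    constructor
    · -- X covariantly finite
      intro M
      obtain ⟨N, g, ⟨hYl, hXr⟩, hfac⟩ := hD ⟨ZB, M, 0⟩
      refine ⟨N.right, g.right, hXr, fun X' hX' h => ?_⟩
      have : ∃ t : N ⟶ (⟨ZB, X', 0⟩ : Comma G (𝟭 A)), g ≫ t =
          ({ left := 𝟙 ZB, right := h, w := by simp } :
            (⟨ZB, M, 0⟩ : Comma G (𝟭 A)) ⟶ ⟨ZB, X', 0⟩) :=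
        hfac _ ⟨hZBY, hX'⟩ _
      obtain ⟨t, ht⟩ := this
      refine ⟨t.right, ?_⟩
      have := congrArg CommaMorphism.right ht
      simpa using this
    · -- Y covariantly finite
      intro M
      obtain ⟨N, g, ⟨hYl, hXr⟩, hfac⟩ := hD ⟨M, ZA, 0⟩
      refine ⟨N.left, g.left, hYl, fun Y' hY' h => ?_⟩
      have : ∃ t : N ⟶ (⟨Y', ZA, 0⟩ : Comma G (𝟭 A)), g ≫ t =
          ({ left := h, right := 𝟙 ZA, w := by simp } :
            (⟨M, ZA, 0⟩ : Comma G (𝟭 A)) ⟶ ⟨Y', ZA, 0⟩) :=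
        hfac _ ⟨hY', hZAX⟩ _
      obtain ⟨t, ht⟩ := this
      refine ⟨t.left, ?_⟩
      have := congrArg CommaMorphism.left ht
      simpa using this
  · rintro ⟨hXcf, hYcf⟩ M
    obtain ⟨B₁, y, hYB₁, hyfac⟩ := hYcf M.left
    obtain ⟨A₁, x, hXA₁, hxfac⟩ := hXcf (pushout M.hom (G.map y))
    refine ⟨⟨B₁, A₁, pushout.inr _ _ ≫ x⟩,
      { left := y, right := pushout.inl _ _ ≫ x,
        w := by
          rw [← Category.assoc, ← pushout.condition]
          simp },
      ⟨hYB₁, hXA₁⟩, ?_⟩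
    rintro X' ⟨hYX', hXX'⟩ h
    obtain ⟨t, ht⟩ := hyfac X'.left hYX' h.left
    have hcond : M.hom ≫ h.right = G.map y ≫ (G.map t ≫ X'.hom) := by
      have hw := h.w
      simp only [Functor.id_map] at hw
      rw [← hw, ← Category.assoc, ← G.map_comp, ht]
    obtain ⟨u, hu⟩ := hxfac X'.right hXX'
      (pushout.desc h.right (G.map t ≫ X'.hom) hcond)
    refine ⟨{ left := t, right := u, w := ?_ }, ?_⟩
    · simp only [Functor.id_map, Category.assoc, hu]
      exact (pushout.inr_desc ..).symm
    · apply CommaMorphism.ext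
      · simpa using ht
      · simp [hu]
        exact pushout.inl_desc ..
end

section
/- Let A and B be abelian categories, F : A → B and G : B → A additive functors with G left adjoint to F. Let X ⊆ A and Y ⊆ B be full subcategories containing zero, and let C_X^Y be the full subcategory of the comma category (B ↓ F(A)) of objects f : B₀ → F(A₀) with B₀ ∈ Y, A₀ ∈ X. Then C_X^Y is functorially finite in (B ↓ F(A)) if and only if X is functorially finite in A and Y is functorially finite in B. -/
open CategoryTheory CategoryTheory.Limits

section ApproximationDefs

variable {C : Type*} [Category C]

/-- `g : X ⟶ M` with `X ∈ P` is a right `P`-approximation of `M`. -/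
def IsRightApproximation (P : C → Prop) {X M : C} (g : X ⟶ M) : Prop :=
  P X ∧ ∀ (X' : C), P X' → ∀ h : X' ⟶ M, ∃ t : X' ⟶ X, t ≫ g = h

/-- `P` is contravariantly finite if every object admits a right `P`-approximation. -/
def ContravariantlyFinite (P : C → Prop) : Prop :=
  ∀ M : C, ∃ (X : C) (g : X ⟶ M), IsRightApproximation P g

/-- `P` is functorially finite if it is both covariantly and contravariantly finite. -/
def FunctoriallyFinite (P : C → Prop) : Prop :=
  CovariantlyFinite P ∧ ContravariantlyFinite P

end ApproximationDefs

section AuxComma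

set_option linter.unusedSectionVars false

variable {A B : Type*} [Category A] [Category B] [Abelian A] [Abelian B]
  (F : A ⥤ B) (G : B ⥤ A)

/-- If `X` and `Y` are covariantly finite, so is the comma subcategory. -/
lemma aux_covariant_comma (adj : G ⊣ F) (X : A → Prop) (Y : B → Prop)
    (hX : CovariantlyFinite X) (hY : CovariantlyFinite Y) :
    CovariantlyFinite (fun Z : Comma (𝟭 B) F => Y Z.left ∧ X Z.right) := by
  intro Z
  obtain ⟨Y₀, b, hY₀, hb⟩ := hY Z.left
  set fs := (adj.homEquiv _ _).symm Z.hom with hfs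
  obtain ⟨X₀, x, hX₀, hx⟩ := hX (pushout fs (G.map b))
  refine ⟨⟨Y₀, X₀, adj.homEquiv _ _ (pushout.inr _ _ ≫ x)⟩,
    ⟨b, pushout.inl _ _ ≫ x, ?_⟩, ⟨hY₀, hX₀⟩, ?_⟩
  · show b ≫ adj.homEquiv _ _ (pushout.inr _ _ ≫ x) = Z.hom ≫ F.map (pushout.inl _ _ ≫ x)
    apply (adj.homEquiv _ _).symm.injective
    rw [Adjunction.homEquiv_naturality_left_symm, Equiv.symm_apply_apply,
      Adjunction.homEquiv_naturality_right_symm, ← pushout.condition_assoc]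
    exact rfl
  · rintro W' ⟨hY', hX'⟩ h
    obtain ⟨s, hs⟩ := hb W'.left hY' h.left
    have hw0 := h.w
    simp only [Functor.id_map] at hw0
    have hw : fs ≫ h.right = G.map b ≫ (G.map s ≫ (adj.homEquiv _ _).symm W'.hom) := by
      rw [← Category.assoc, ← G.map_comp, hs, ← Adjunction.homEquiv_naturality_left_symm,
        hw0, Adjunction.homEquiv_naturality_right_symm]
      exact rfl
    obtain ⟨t, ht⟩ := hx W'.right hX'
      (pushout.desc h.right (G.map s ≫ (adj.homEquiv _ _).symm W'.hom) hw)
    refine ⟨⟨s, t, ?_⟩, ?_⟩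
    · show s ≫ W'.hom = adj.homEquiv _ _ (pushout.inr _ _ ≫ x) ≫ F.map t
      apply (adj.homEquiv _ _).symm.injective
      rw [Adjunction.homEquiv_naturality_left_symm, Adjunction.homEquiv_naturality_right_symm,
        Equiv.symm_apply_apply, Category.assoc, ht, pushout.inr_desc]
    · apply CommaMorphism.ext
      · exact hs
      · show (pushout.inl _ _ ≫ x) ≫ t = h.right
        rw [Category.assoc, ht, pushout.inl_desc]

/-- If `X` and `Y` are contravariantly finite, so is the comma subcategory. -/
lemma aux_contravariant_comma (X : A → Prop) (Y : B → Prop)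
    (hX : ContravariantlyFinite X) (hY : ContravariantlyFinite Y) :
    ContravariantlyFinite (fun Z : Comma (𝟭 B) F => Y Z.left ∧ X Z.right) := by
  intro Z
  obtain ⟨X₀, a, hX₀, ha⟩ := hX Z.right
  obtain ⟨Y₀, y, hY₀, hy⟩ := hY (pullback Z.hom (F.map a))
  refine ⟨⟨Y₀, X₀, y ≫ pullback.snd _ _⟩, ⟨y ≫ pullback.fst _ _, a, ?_⟩, ⟨hY₀, hX₀⟩, ?_⟩
  · show (y ≫ pullback.fst _ _) ≫ Z.hom = (y ≫ pullback.snd _ _) ≫ F.map a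
    rw [Category.assoc, Category.assoc, pullback.condition]
  · rintro W' ⟨hY', hX'⟩ h
    obtain ⟨t, ht⟩ := ha W'.right hX' h.right
    have hw0 := h.w
    simp only [Functor.id_map] at hw0
    have hw : h.left ≫ Z.hom = (W'.hom ≫ F.map t) ≫ F.map a := by
      rw [Category.assoc, ← F.map_comp, ht]
      exact hw0
    obtain ⟨s, hs⟩ := hy W'.left hY' (pullback.lift h.left (W'.hom ≫ F.map t) hw)
    refine ⟨⟨s, t, ?_⟩, ?_⟩
    · show s ≫ (y ≫ pullback.snd _ _) = W'.hom ≫ F.map t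
      rw [← Category.assoc, hs, pullback.lift_snd]
    · apply CommaMorphism.ext
      · show s ≫ (y ≫ pullback.fst _ _) = h.left
        rw [← Category.assoc, hs, pullback.lift_fst]
      · exact ht

end AuxComma

/-- Let `A`, `B` be abelian categories, `F : A ⥤ B`, `G : B ⥤ A` additive
functors with `G` left adjoint to `F`; let `X ⊆ A`, `Y ⊆ B` be full subcategories
containing zero, and `C_X^Y` the full subcategory of the comma category `(B ↓ F(A))` of
objects `f : B₀ ⟶ F(A₀)` with `B₀ ∈ Y`, `A₀ ∈ X`.  Then `C_X^Y` is functorially finite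
in `(B ↓ F(A))` if and only if `X` and `Y` are functorially finite. -/
theorem functorially_finite_comma_iff
    {A B : Type*} [Category A] [Category B] [Abelian A] [Abelian B]
    (F : A ⥤ B) (G : B ⥤ A) [F.Additive] [G.Additive] (adj : G ⊣ F)
    (X : A → Prop) (Y : B → Prop)
    (hX0 : ∃ Z : A, IsZero Z ∧ X Z) (hY0 : ∃ Z : B, IsZero Z ∧ Y Z) :
    FunctoriallyFinite (fun Z : Comma (𝟭 B) F => Y Z.left ∧ X Z.right) ↔
      (FunctoriallyFinite X ∧ FunctoriallyFinite Y) := by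
  obtain ⟨ZX, hZX, hZXmem⟩ := hX0
  obtain ⟨ZY, hZY, hZYmem⟩ := hY0
  constructor
  · rintro ⟨hcov, hcontra⟩
    refine ⟨⟨?_, ?_⟩, ⟨?_, ?_⟩⟩
    · -- X covariantly finite
      intro M
      obtain ⟨W₀, g, hWmem, hlift⟩ := hcov ⟨ZY, M, 0⟩
      refine ⟨W₀.right, g.right, hWmem.2, ?_⟩
      intro X' hX' h
      obtain ⟨t, ht⟩ := hlift ⟨ZY, X', 0⟩ ⟨hZYmem, hX'⟩ ⟨𝟙 ZY, h, by simp⟩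
      exact ⟨t.right, by simpa using congrArg CommaMorphism.right ht⟩
    · -- X contravariantly finite
      intro M
      obtain ⟨W₀, g, hWmem, hlift⟩ := hcontra ⟨ZY, M, 0⟩
      refine ⟨W₀.right, g.right, hWmem.2, ?_⟩
      intro X' hX' h
      obtain ⟨t, ht⟩ := hlift ⟨ZY, X', 0⟩ ⟨hZYmem, hX'⟩ ⟨𝟙 ZY, h, by simp⟩
      exact ⟨t.right, by simpa using congrArg CommaMorphism.right ht⟩
    · -- Y covariantly finite
      intro N
      obtain ⟨W₀, g, hWmem, hlift⟩ := hcov ⟨N, ZX, 0⟩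
      refine ⟨W₀.left, g.left, hWmem.1, ?_⟩
      intro Y' hY' h
      obtain ⟨t, ht⟩ := hlift ⟨Y', ZX, 0⟩ ⟨hY', hZXmem⟩ ⟨h, 𝟙 ZX, by simp⟩
      exact ⟨t.left, by simpa using congrArg CommaMorphism.left ht⟩
    · -- Y contravariantly finite
      intro N
      obtain ⟨W₀, g, hWmem, hlift⟩ := hcontra ⟨N, ZX, 0⟩
      refine ⟨W₀.left, g.left, hWmem.1, ?_⟩
      intro Y' hY' h
      obtain ⟨t, ht⟩ := hlift ⟨Y', ZX, 0⟩ ⟨hY', hZXmem⟩ ⟨h, 𝟙 ZX, by simp⟩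
      exact ⟨t.left, by simpa using congrArg CommaMorphism.left ht⟩
  · rintro ⟨⟨hXc, hXcc⟩, ⟨hYc, hYcc⟩⟩
    exact ⟨aux_covariant_comma F G adj X Y hXc hYc,
      aux_contravariant_comma F X Y hXcc hYcc⟩
end

section
/- Let A be an abelian category and X ⊆ A a full subcategory containing the zero object. Let maps(X) denote the full subcategory of the arrow category of A consisting of morphisms f : X₁ → X₂ with X₁, X₂ ∈ X. Then X is covariantly (respectively contravariantly, functorially) finite in A if and only if maps(X) is covariantly (respectively contravariantly, functorially) finite in the arrow category of A. -/
open CategoryTheory CategoryTheory.Limits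

section Aux

variable {A : Type*} [Category A] [Abelian A] (X : A → Prop)

theorem cov_aux :
    CovariantlyFinite X ↔
      CovariantlyFinite (fun f : Arrow A => X f.left ∧ X f.right) := by
  constructor
  · intro hX M
    obtain ⟨X₁, g₁, hg₁, hg₁'⟩ := hX M.left
    obtain ⟨X₂, q, hq, hq'⟩ := hX (pushout M.hom g₁)
    refine ⟨Arrow.mk (pushout.inr M.hom g₁ ≫ q),
      Arrow.homMk (u := g₁) (v := pushout.inl M.hom g₁ ≫ q) ?_, ⟨hg₁, hq⟩, ?_⟩
    · simp only [Arrow.mk_hom, ← Category.assoc, ← pushout.condition]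
    · intro b hb h
      obtain ⟨u₁, hu₁⟩ := hg₁' b.left hb.1 h.left
      have hw : M.hom ≫ h.right = g₁ ≫ u₁ ≫ b.hom := by
        rw [← Arrow.w h, ← hu₁]; simp
      obtain ⟨u₂, hu₂⟩ := hq' b.right hb.2 (pushout.desc h.right (u₁ ≫ b.hom) hw)
      refine ⟨Arrow.homMk (u := u₁) (v := u₂) ?_, ?_⟩
      · simp only [Arrow.mk_hom, Category.assoc, hu₂]
        simp
        exact (pushout.inr_desc _ _ _).symm
      · apply CommaMorphism.ext
        · simpa using hu₁
        · show (pushout.inl M.hom g₁ ≫ q) ≫ u₂ = h.right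
          rw [Category.assoc, hu₂, pushout.inl_desc]
  · intro hX M
    obtain ⟨b, g, ⟨hb1, hb2⟩, hg⟩ := hX (Arrow.mk (𝟙 M))
    refine ⟨b.left, g.left, hb1, fun X' hX' h => ?_⟩
    obtain ⟨t, ht⟩ := hg (Arrow.mk (𝟙 X')) ⟨hX', hX'⟩ (Arrow.homMk (u := h) (v := h) (by simp))
    exact ⟨t.left, by have := congrArg CommaMorphism.left ht; simpa using this⟩

theorem contra_aux :
    ContravariantlyFinite X ↔
      ContravariantlyFinite (fun f : Arrow A => X f.left ∧ X f.right) := by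
  constructor
  · intro hX M
    obtain ⟨X₂, g₂, hg₂, hg₂'⟩ := hX M.right
    obtain ⟨X₁, q, hq, hq'⟩ := hX (pullback M.hom g₂)
    refine ⟨Arrow.mk (q ≫ pullback.snd M.hom g₂),
      Arrow.homMk (u := q ≫ pullback.fst M.hom g₂) (v := g₂) ?_, ⟨hq, hg₂⟩, ?_⟩
    · simp only [Arrow.mk_hom, Category.assoc, pullback.condition]
    · intro b hb h
      obtain ⟨u₂, hu₂⟩ := hg₂' b.right hb.2 h.right
      have hw : (b.hom ≫ u₂) ≫ g₂ = h.left ≫ M.hom := by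
        rw [Category.assoc, hu₂, Arrow.w h]
      obtain ⟨u₁, hu₁⟩ := hq' b.left hb.1 (pullback.lift h.left (b.hom ≫ u₂) hw.symm)
      refine ⟨Arrow.homMk (u := u₁) (v := u₂) ?_, ?_⟩
      · simp only [Arrow.mk_hom, ← Category.assoc, hu₁]
        simp
        exact pullback.lift_snd _ _ _
      · apply CommaMorphism.ext
        · show u₁ ≫ q ≫ pullback.fst M.hom g₂ = h.left
          rw [← Category.assoc, hu₁, pullback.lift_fst]
        · simpa using hu₂
  · intro hX M
    obtain ⟨b, g, ⟨hb1, hb2⟩, hg⟩ := hX (Arrow.mk (𝟙 M))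
    refine ⟨b.right, g.right, hb2, fun X' hX' h => ?_⟩
    obtain ⟨t, ht⟩ := hg (Arrow.mk (𝟙 X')) ⟨hX', hX'⟩ (Arrow.homMk (u := h) (v := h) (by simp))
    exact ⟨t.right, by have := congrArg CommaMorphism.right ht; simpa using this⟩

end Aux

/-- Let `A` be an abelian category and `X ⊆ A` a full subcategory containing
the zero object.  Let `maps(X)` be the full subcategory of the arrow category of `A`
consisting of morphisms `f : X₁ ⟶ X₂` with `X₁, X₂ ∈ X`.  Then `X` is covariantly
(resp. contravariantly, functorially) finite in `A` if and only if `maps(X)` is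
covariantly (resp. contravariantly, functorially) finite in the arrow category of `A`. -/
theorem maps_functorially_finite_iff
    {A : Type*} [Category A] [Abelian A]
    (X : A → Prop) (hX0 : ∃ Z : A, IsZero Z ∧ X Z) :
    (CovariantlyFinite X ↔
        CovariantlyFinite (fun f : Arrow A => X f.left ∧ X f.right)) ∧
    (ContravariantlyFinite X ↔
        ContravariantlyFinite (fun f : Arrow A => X f.left ∧ X f.right)) ∧
    (FunctoriallyFinite X ↔
        FunctoriallyFinite (fun f : Arrow A => X f.left ∧ X f.right)) := by
  refine ⟨cov_aux X, contra_aux X, ?_⟩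
  unfold FunctoriallyFinite
  rw [cov_aux X, contra_aux X]
end

section
/- Let A be an abelian category with projective covers, and let f : M → N be a morphism in A with Coker(f) ≠ 0. Let α : P₀ → M be a projective cover of M, β : Q₀ → Coker(f) a projective cover of Coker(f), and β' : Q₀ → N a lift of β along the cokernel projection π : N → Coker(f). Then the morphism (α, (f∘α, β')) : (P₀, [1;0], P₀ ⊕ Q₀) → (M, f, N) is a projective cover in the arrow category of A, where [1;0] : P₀ → P₀ ⊕ Q₀ is the canonical inclusion. -/
open CategoryTheory CategoryTheory.Limits ZeroObject

/-- `p : P ⟶ M` is a projective cover: `P` is projective, `p` is an epimorphism and `p` is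
right minimal (every endomorphism `θ` of `P` with `θ ≫ p = p` is an isomorphism). -/
def IsProjectiveCover {C : Type*} [Category C] {P M : C} (p : P ⟶ M) : Prop :=
  Projective P ∧ Epi p ∧ ∀ θ : P ⟶ P, θ ≫ p = p → IsIso θ

/-- A componentwise epi in the arrow category is an epi. -/
lemma arrow_epi_of_components {A : Type*} [Category A] {X Y : Arrow A} (e : X ⟶ Y)
    (h1 : Epi e.left) (h2 : Epi e.right) : Epi e := by
  constructor
  intro Z g h hgh
  ext
  · exact (cancel_epi e.left).1 (congrArg CommaMorphism.left hgh)
  · exact (cancel_epi e.right).1 (congrArg CommaMorphism.right hgh)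

/-- The left component of an epi in the arrow category is an epi. -/
lemma arrow_epi_left {A : Type*} [Category A] [Abelian A] {X Y : Arrow A} (e : X ⟶ Y)
    [Epi e] : Epi e.left := by
  constructor
  intro Z g h hgh
  let g' : Y ⟶ Arrow.mk (0 : Z ⟶ 0) := Arrow.homMk (u := g) (v := 0) (by simp)
  let h' : Y ⟶ Arrow.mk (0 : Z ⟶ 0) := Arrow.homMk (u := h) (v := 0) (by simp)
  have : e ≫ g' = e ≫ h' := by
    ext
    · exact hgh
    · rfl
  have := (cancel_epi e).1 this
  exact congrArg CommaMorphism.left this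

/-- The right component of an epi in the arrow category is an epi. -/
lemma arrow_epi_right {A : Type*} [Category A] [Abelian A] {X Y : Arrow A} (e : X ⟶ Y)
    [Epi e] : Epi e.right := by
  constructor
  intro Z g h hgh
  let g' : Y ⟶ Arrow.mk (𝟙 Z) := Arrow.homMk (u := Y.hom ≫ g) (v := g) (by simp)
  let h' : Y ⟶ Arrow.mk (𝟙 Z) := Arrow.homMk (u := Y.hom ≫ h) (v := h) (by simp)
  have : e ≫ g' = e ≫ h' := by
    ext
    · show e.left ≫ Y.hom ≫ g = e.left ≫ Y.hom ≫ h
      rw [Arrow.w_assoc e, Arrow.w_assoc e, hgh]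
    · exact hgh
  have := (cancel_epi e).1 this
  exact congrArg CommaMorphism.right this

/-- Objects of the form `(P, [1;0], P ⊞ Q)` with `P`, `Q` projective are projective in the
arrow category. -/
lemma arrow_inl_projective {A : Type*} [Category A] [Abelian A] {P Q : A}
    (hP : Projective P) (hQ : Projective Q) :
    Projective (Arrow.mk (biprod.inl : P ⟶ P ⊞ Q)) := by
  constructor
  intro E Y g e he
  haveI := arrow_epi_left e
  haveI := arrow_epi_right e
  obtain ⟨l, hl⟩ := hP.factors g.left e.left
  obtain ⟨r₂, hr₂⟩ := hQ.factors (biprod.inr ≫ g.right) e.right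
  refine ⟨Arrow.homMk (u := l) (v := biprod.desc (l ≫ E.hom) r₂) (by simp), ?_⟩
  ext
  · exact hl
  · show biprod.desc (l ≫ E.hom) r₂ ≫ e.right = g.right
    apply biprod.hom_ext'
    · simp only [biprod.inl_desc_assoc]
      rw [Category.assoc, ← Arrow.w e, ← Category.assoc, hl]
      simpa using Arrow.w g
    · simpa using hr₂

lemma ofComponents_id {A : Type*} [Category A] [Abelian A] (P Q : A) :
    Biprod.ofComponents (𝟙 P) (0 : P ⟶ Q) (0 : Q ⟶ P) (𝟙 Q) = 𝟙 (P ⊞ Q) := by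
  have := Biprod.ofComponents_eq (𝟙 (P ⊞ Q))
  simpa using this

/-- A lower-triangular matrix with invertible diagonal entries is invertible. -/
lemma triangular_isIso {A : Type*} [Category A] [Abelian A] {P Q : A}
    (θ₁ : P ⟶ P) (c : Q ⟶ P) (d : Q ⟶ Q) [IsIso θ₁] [IsIso d] :
    IsIso (Biprod.ofComponents θ₁ (0 : P ⟶ Q) c d) := by
  refine ⟨Biprod.ofComponents (inv θ₁) 0 (-(inv d ≫ c ≫ inv θ₁)) (inv d), ?_, ?_⟩
  · rw [Biprod.ofComponents_comp]
    simp [ofComponents_id]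
  · rw [Biprod.ofComponents_comp]
    simp [ofComponents_id]

/-- A "lower triangular" endomorphism of `P ⊞ Q` with invertible diagonal entries
is invertible. -/
lemma triangular_isIso' {A : Type*} [Category A] [Abelian A] {P Q : A}
    (θ₁ : P ⟶ P) (θ₂ : P ⊞ Q ⟶ P ⊞ Q)
    (h1 : IsIso θ₁) (h2 : IsIso (biprod.inr ≫ θ₂ ≫ biprod.snd))
    (hsq : θ₁ ≫ biprod.inl = biprod.inl ≫ θ₂) : IsIso θ₂ := by
  haveI := h1; haveI := h2
  have e1 : biprod.inl ≫ θ₂ ≫ biprod.fst = θ₁ := by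
    rw [← Category.assoc, ← hsq]; simp
  have e2 : biprod.inl ≫ θ₂ ≫ biprod.snd = 0 := by
    rw [← Category.assoc, ← hsq]; simp
  have hθr : θ₂ =
      Biprod.ofComponents θ₁ 0 (biprod.inr ≫ θ₂ ≫ biprod.fst)
        (biprod.inr ≫ θ₂ ≫ biprod.snd) := by
    rw [← e1, ← e2]
    exact (Biprod.ofComponents_eq θ₂).symm
  rw [hθr]
  exact triangular_isIso _ _ _

/-- The map `[f∘α, β'] : P₀ ⊞ Q₀ ⟶ N` is an epimorphism. -/
lemma desc_epi {A : Type*} [Category A] [Abelian A]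
    {M N : A} (f : M ⟶ N) {P₀ Q₀ : A} (α : P₀ ⟶ M)
    (β : Q₀ ⟶ cokernel f) (β' : Q₀ ⟶ N)
    (hα : Epi α) (hβ : Epi β) (hβ' : β' ≫ cokernel.π f = β) :
    Epi (biprod.desc (α ≫ f) β') := by
  apply Preadditive.epi_of_cancel_zero
  intro R g hg
  have h1 : α ≫ f ≫ g = 0 := by
    have := biprod.inl ≫= hg
    simpa using this
  have h2 : f ≫ g = 0 := by
    have : α ≫ f ≫ g = α ≫ 0 := by rw [comp_zero]; exact h1
    exact (cancel_epi α).1 this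
  have h3 : β' ≫ g = 0 := by
    have := biprod.inr ≫= hg
    simpa using this
  obtain ⟨g', hg'⟩ : ∃ g', g = cokernel.π f ≫ g' :=
    ⟨cokernel.desc f g h2, by rw [cokernel.π_desc]⟩
  have h4 : β ≫ g' = 0 := by
    rw [← hβ', Category.assoc, ← hg', h3]
  have h5 : g' = 0 := by rwa [← cancel_epi β, comp_zero]
  rw [hg', h5, comp_zero]

/-- Let `A` be an abelian category with projective covers and
`f : M ⟶ N` a morphism with `Coker f ≠ 0`.  Let `α : P₀ ⟶ M` be a projective cover of
`M`, `β : Q₀ ⟶ Coker f` a projective cover of `Coker f` and `β' : Q₀ ⟶ N` a lift of `β`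
along the cokernel projection.  Then the morphism
`(α, [f∘α, β']) : (P₀, [1;0], P₀ ⊕ Q₀) ⟶ (M, f, N)` is a projective cover in the arrow
category of `A`, where `[1;0] : P₀ ⟶ P₀ ⊞ Q₀` is the canonical inclusion. -/
theorem projective_cover_in_arrow_category
    {A : Type*} [Category A] [Abelian A]
    (hpc : ∀ M : A, ∃ (P : A) (p : P ⟶ M), IsProjectiveCover p)
    {M N : A} (f : M ⟶ N) (hcoker : ¬ IsZero (cokernel f))
    {P₀ Q₀ : A} (α : P₀ ⟶ M) (hα : IsProjectiveCover α)
    (β : Q₀ ⟶ cokernel f) (hβ : IsProjectiveCover β)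
    (β' : Q₀ ⟶ N) (hβ' : β' ≫ cokernel.π f = β) :
    IsProjectiveCover
      (Arrow.homMk (f := Arrow.mk (biprod.inl : P₀ ⟶ P₀ ⊞ Q₀)) (g := Arrow.mk f)
        (u := α) (v := biprod.desc (α ≫ f) β') (by simp)) := by
  obtain ⟨hPproj, hPepi, hPmin⟩ := hα
  obtain ⟨hQproj, hQepi, hQmin⟩ := hβ
  refine ⟨arrow_inl_projective hPproj hQproj, ?_, ?_⟩
  · -- epi
    haveI : Epi α := hPepi
    haveI : Epi (biprod.desc (α ≫ f) β') := desc_epi f α β β' hPepi hQepi hβ'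
    exact arrow_epi_of_components _ ‹Epi α› ‹_›
  · -- right minimal
    intro θ hθ
    let θ₁ : P₀ ⟶ P₀ := θ.left
    let θ₂ : P₀ ⊞ Q₀ ⟶ P₀ ⊞ Q₀ := θ.right
    have hl : θ₁ ≫ α = α := congrArg CommaMorphism.left hθ
    have hr : θ₂ ≫ biprod.desc (α ≫ f) β' = biprod.desc (α ≫ f) β' :=
      congrArg CommaMorphism.right hθ
    haveI h1 : IsIso θ₁ := hPmin _ hl
    have hsq : θ₁ ≫ biprod.inl = biprod.inl ≫ θ₂ := θ.w
    -- the (2,2)-entry of θ₂ is right minimal for β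
    have hexp : biprod.inr ≫ θ₂ =
        biprod.lift (biprod.inr ≫ θ₂ ≫ biprod.fst) (biprod.inr ≫ θ₂ ≫ biprod.snd) := by
      apply biprod.hom_ext <;> simp
    have h5 : (biprod.inr ≫ θ₂ ≫ biprod.fst) ≫ (α ≫ f) +
        (biprod.inr ≫ θ₂ ≫ biprod.snd) ≫ β' = β' := by
      calc (biprod.inr ≫ θ₂ ≫ biprod.fst) ≫ (α ≫ f) +
            (biprod.inr ≫ θ₂ ≫ biprod.snd) ≫ β'
          = biprod.lift (biprod.inr ≫ θ₂ ≫ biprod.fst) (biprod.inr ≫ θ₂ ≫ biprod.snd) ≫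
              biprod.desc (α ≫ f) β' := (biprod.lift_desc).symm
        _ = biprod.inr ≫ θ₂ ≫ biprod.desc (α ≫ f) β' := by
            rw [← hexp, Category.assoc]
        _ = biprod.inr ≫ biprod.desc (α ≫ f) β' := by rw [hr]
        _ = β' := by simp
    have h6 : (biprod.inr ≫ θ₂ ≫ biprod.snd) ≫ β = β := by
      have := h5 =≫ cokernel.π f
      simpa [hβ', cokernel.condition] using this
    haveI h2 : IsIso (biprod.inr ≫ θ₂ ≫ biprod.snd) := hQmin _ h6
    haveI h3 : IsIso θ₂ := triangular_isIso' θ₁ θ₂ h1 h2 hsq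
    -- assemble the inverse in the arrow category
    have hw : inv θ₁ ≫ biprod.inl = biprod.inl ≫ inv θ₂ := by
      rw [IsIso.eq_comp_inv, Category.assoc, ← hsq, IsIso.inv_hom_id_assoc]
    refine ⟨⟨⟨inv θ₁, inv θ₂, by simpa using hw⟩, ?_, ?_⟩⟩
    · ext
      · show θ₁ ≫ inv θ₁ = 𝟙 P₀
        simp
      · show θ₂ ≫ inv θ₂ = 𝟙 (P₀ ⊞ Q₀)
        simp
    · ext
      · show inv θ₁ ≫ θ₁ = 𝟙 P₀
        simp
      · show inv θ₂ ≫ θ₂ = 𝟙 (P₀ ⊞ Q₀)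
        simp
end

section
/- Let A be an abelian category and let 0 → τM →^j E →^π M → 0 be an almost split (Auslander–Reiten) exact sequence in A. Then the sequence 0 → (τM, 0, 0) →^{(j,0)} (E, π, M) →^{(π, 1_M)} (M, 1_M, M) → 0 is an almost split sequence in the arrow category of A. -/
open CategoryTheory CategoryTheory.Limits ZeroObject

section

variable {A : Type*} [Category A] [Abelian A]

/-- The morphism `(j, 0) : (τM, 0, 0) ⟶ (E, π, M)` in the arrow category. -/
noncomputable def arrowU {T E M : A} (j : T ⟶ E) (π : E ⟶ M) (w : j ≫ π = 0) :
    Arrow.mk (0 : T ⟶ (0 : A)) ⟶ Arrow.mk π :=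
  Arrow.homMk (u := j) (v := (0 : (0 : A) ⟶ M)) (by simp [w])

/-- The morphism `(π, 1_M) : (E, π, M) ⟶ (M, 1_M, M)` in the arrow category. -/
noncomputable def arrowP {E M : A} (π : E ⟶ M) : Arrow.mk π ⟶ Arrow.mk (𝟙 M) :=
  Arrow.homMk (u := π) (v := 𝟙 M) (by simp)

/-- If `0 → τM →ʲ E →^π M → 0` is an almost split exact sequence in the
abelian category `A`, then `0 → (τM,0,0) →⁽ʲ'⁰⁾ (E,π,M) →⁽π,1⁾ (M,1,M) → 0` is an almost
split sequence in the arrow category of `A` (exactness being componentwise). -/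
theorem almost_split_sequence_in_arrow_category_ending_at_identity
    {T E M : A} (j : T ⟶ E) (π : E ⟶ M) (w : j ≫ π = 0)
    (hses : (ShortComplex.mk j π w).ShortExact)
    (hnonsplit : ¬ IsSplitEpi π)
    (hras : ∀ (W : A) (h : W ⟶ M), ¬ IsSplitEpi h → ∃ t : W ⟶ E, t ≫ π = h)
    (hlas : ∀ (W : A) (h : T ⟶ W), ¬ IsSplitMono h → ∃ t : E ⟶ W, j ≫ t = h) :
    Mono (arrowU j π w) ∧ Epi (arrowP π) ∧
    -- exactness of the sequence in the arrow category, i.e. componentwise exactness: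
    (ShortComplex.mk j π w).ShortExact ∧
    (ShortComplex.mk (0 : (0 : A) ⟶ M) (𝟙 M) (by simp)).ShortExact ∧
    -- the sequence does not split:
    ¬ IsSplitEpi (arrowP π) ∧
    -- `(π, 1_M)` is right almost split:
    (∀ (W : Arrow A) (h : W ⟶ Arrow.mk (𝟙 M)), ¬ IsSplitEpi h →
      ∃ t : W ⟶ Arrow.mk π, t ≫ arrowP π = h) ∧
    -- `(j, 0)` is left almost split:
    (∀ (W : Arrow A) (h : Arrow.mk (0 : T ⟶ (0 : A)) ⟶ W), ¬ IsSplitMono h →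
      ∃ t : Arrow.mk π ⟶ W, arrowU j π w ≫ t = h) := by
  have hmonoj : Mono j := hses.mono_f
  have hepiπ : Epi π := hses.epi_g
  refine ⟨?_, ?_, hses, ?_, ?_, ?_, ?_⟩
  · constructor
    intro W φ ψ hφψ
    ext
    · have := congrArg CommaMorphism.left hφψ
      simp only [Arrow.comp_left] at this
      have hl : φ.left ≫ j = ψ.left ≫ j := by
        simpa [arrowU] using this
      exact (cancel_mono j).mp hl
    · apply (isZero_zero A).eq_of_tgt
  · constructor
    intro W φ ψ hφψ
    ext
    · have := congrArg CommaMorphism.left hφψ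
      simp only [Arrow.comp_left] at this
      have hl : π ≫ φ.left = π ≫ ψ.left := by
        simpa [arrowP] using this
      exact (cancel_epi π).mp hl
    · have := congrArg CommaMorphism.right hφψ
      simp only [Arrow.comp_right] at this
      simpa [arrowP] using this
  · constructor
    · rw [ShortComplex.exact_iff_mono]
      · infer_instance
      · rfl
  · intro hsplit
    obtain ⟨s, hs⟩ := hsplit
    apply hnonsplit
    refine ⟨⟨s.left, ?_⟩⟩
    have := congrArg CommaMorphism.left hs
    simpa [arrowP] using this
  · intro W h hnse
    have hleft : ¬ IsSplitEpi h.left := by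
      intro hse
      obtain ⟨s, hs⟩ := hse
      apply hnse
      have hwcomm : h.left = W.hom ≫ h.right := by
        simpa using h.w
      refine ⟨⟨Arrow.homMk (u := s) (v := s ≫ W.hom) (by simp), ?_⟩⟩
      ext
      · show s ≫ h.left = 𝟙 M
        exact hs
      · show (s ≫ W.hom) ≫ h.right = 𝟙 M
        rw [Category.assoc, ← hwcomm, hs]; rfl
    obtain ⟨t₁, ht₁⟩ := hras W.left h.left hleft
    have hwcomm : h.left = W.hom ≫ h.right := by simpa using h.w
    refine ⟨Arrow.homMk (u := t₁) (v := h.right)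
      (by show t₁ ≫ π = W.hom ≫ h.right; rw [ht₁, hwcomm]), ?_⟩
    ext
    · show t₁ ≫ π = h.left
      exact ht₁
    · show h.right ≫ 𝟙 M = h.right
      simp
  · intro W h hnsm
    have hleft : ¬ IsSplitMono h.left := by
      intro hsm
      obtain ⟨r, hr⟩ := hsm
      apply hnsm
      refine ⟨⟨Arrow.homMk (u := r) (v := (0 : W.right ⟶ (0 : A)))
        (by apply (isZero_zero A).eq_of_tgt), ?_⟩⟩
      ext
      · simpa using hr
      · apply (isZero_zero A).eq_of_src
    obtain ⟨t₁, ht₁⟩ := hlas W.left h.left hleft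
    have hz : j ≫ (t₁ ≫ W.hom) = 0 := by
      rw [← Category.assoc, ht₁]
      simpa using h.w
    obtain ⟨t₂, ht₂⟩ := CokernelCofork.IsColimit.desc' hses.gIsCokernel (t₁ ≫ W.hom) hz
    refine ⟨Arrow.homMk (u := t₁) (v := t₂) ht₂.symm, ?_⟩
    ext
    · show j ≫ t₁ = h.left
      exact ht₁
    · apply (isZero_zero A).eq_of_src


end
end

section
/- Let A be an abelian category and let 0 → τM →^j E →^π M → 0 be an almost split exact sequence in A. Then the sequence 0 → (τM, 1_{τM}, τM) →^{(1_{τM}, j)} (τM, j, E) →^{(0, π)} (0, 0, M) → 0 is an almost split sequence in the arrow category of A. -/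
open CategoryTheory CategoryTheory.Limits ZeroObject

section

variable {A : Type*} [Category A] [Abelian A]

/-- The morphism `(1_{τM}, j) : (τM, 1, τM) ⟶ (τM, j, E)` in the arrow category. -/
noncomputable def arrowU' {T E : A} (j : T ⟶ E) :
    Arrow.mk (𝟙 T) ⟶ Arrow.mk j :=
  Arrow.homMk (u := 𝟙 T) (v := j) (by simp)

/-- The morphism `(0, π) : (τM, j, E) ⟶ (0, 0, M)` in the arrow category. -/
noncomputable def arrowP' {T E M : A} (j : T ⟶ E) (π : E ⟶ M) (w : j ≫ π = 0) :
    Arrow.mk j ⟶ Arrow.mk (0 : (0 : A) ⟶ M) :=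
  Arrow.homMk (u := (0 : T ⟶ (0 : A))) (v := π) (by simp [w])

/-- If `0 → τM →ʲ E →^π M → 0` is an almost split exact sequence in the
abelian category `A`, then `0 → (τM,1,τM) →⁽¹'ʲ⁾ (τM,j,E) →⁽⁰,π⁾ (0,0,M) → 0` is an
almost split sequence in the arrow category of `A` (exactness being componentwise). -/
theorem almost_split_sequence_in_arrow_category_starting_at_identity
    {T E M : A} (j : T ⟶ E) (π : E ⟶ M) (w : j ≫ π = 0)
    (hses : (ShortComplex.mk j π w).ShortExact)
    (hnonsplit : ¬ IsSplitEpi π)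
    (hras : ∀ (W : A) (h : W ⟶ M), ¬ IsSplitEpi h → ∃ t : W ⟶ E, t ≫ π = h)
    (hlas : ∀ (W : A) (h : T ⟶ W), ¬ IsSplitMono h → ∃ t : E ⟶ W, j ≫ t = h) :
    Mono (arrowU' j) ∧ Epi (arrowP' j π w) ∧
    -- exactness of the sequence in the arrow category, i.e. componentwise exactness:
    (ShortComplex.mk (𝟙 T) (0 : T ⟶ (0 : A)) (by simp)).ShortExact ∧
    (ShortComplex.mk j π w).ShortExact ∧
    -- the sequence does not split:
    ¬ IsSplitEpi (arrowP' j π w) ∧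
    -- `(0, π)` is right almost split:
    (∀ (W : Arrow A) (h : W ⟶ Arrow.mk (0 : (0 : A) ⟶ M)), ¬ IsSplitEpi h →
      ∃ t : W ⟶ Arrow.mk j, t ≫ arrowP' j π w = h) ∧
    -- `(1, j)` is left almost split:
    (∀ (W : Arrow A) (h : Arrow.mk (𝟙 T) ⟶ W), ¬ IsSplitMono h →
      ∃ t : Arrow.mk j ⟶ W, arrowU' j ≫ t = h) := by

  have hmonoj : Mono j := hses.mono_f
  have hepig : Epi π := hses.epi_g
  refine ⟨?_, ?_, ?_, hses, ?_, ?_, ?_⟩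
  · constructor
    intro Z f g hfg
    ext
    · have := congrArg CommaMorphism.left hfg
      simpa [arrowU'] using this
    · have := congrArg CommaMorphism.right hfg
      simp only [arrowU', Arrow.homMk, Comma.comp_right] at this
      exact (cancel_mono j).1 this
  · constructor
    intro Z f g hfg
    ext
    · exact (isZero_zero A).eq_of_src _ _
    · have := congrArg CommaMorphism.right hfg
      simp only [arrowP', Arrow.homMk, Comma.comp_right] at this
      exact (cancel_epi π).1 this
  · have hepi0 : Epi (0 : T ⟶ (0 : A)) := by
      constructor
      intro Z a b _
      exact (isZero_zero A).eq_of_src a b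
    exact ⟨by rw [ShortComplex.exact_iff_epi _ rfl]; infer_instance⟩
  · intro hsplit
    apply hnonsplit
    obtain ⟨s, hs⟩ := hsplit
    refine ⟨⟨s.right, ?_⟩⟩
    have := congrArg CommaMorphism.right hs
    simpa [arrowP'] using this
  · intro W h hh
    have hww : W.hom ≫ h.right = 0 := by
      have := h.w
      simp only [Functor.id_map, Arrow.mk_hom, comp_zero] at this
      exact this.symm
    have hwr : ¬ IsSplitEpi h.right := by
      intro ⟨r, hr⟩
      apply hh
      refine ⟨⟨⟨(0 : (0:A) ⟶ W.left), r, ?_⟩, ?_⟩⟩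
      · exact (isZero_zero A).eq_of_src _ _
      · ext
        · exact (isZero_zero A).eq_of_src _ _
        · exact hr
    obtain ⟨t₂, ht₂⟩ := hras W.right h.right hwr
    have h0 : (W.hom ≫ t₂) ≫ (ShortComplex.mk j π w).g = 0 := by
      dsimp
      rw [Category.assoc, ht₂, hww]
    refine ⟨⟨hses.exact.lift (W.hom ≫ t₂) h0, t₂, ?_⟩, ?_⟩
    · exact hses.exact.lift_f _ _
    · ext
      · exact (isZero_zero A).eq_of_tgt _ _
      · exact ht₂
  · intro W h hh
    have hw : h.left ≫ W.hom = h.right := by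
      have := h.w
      set_option linter.unnecessarySimpa false in simpa using this
    have hwr : ¬ IsSplitMono h.right := by
      intro ⟨r, hr⟩
      apply hh
      refine ⟨⟨⟨W.hom ≫ r, r, by simp⟩, ?_⟩⟩
      ext
      · show h.left ≫ W.hom ≫ r = 𝟙 T
        rw [← Category.assoc, hw, hr]
        rfl
      · exact hr
    obtain ⟨t₂, ht₂⟩ := hlas W.right h.right hwr
    refine ⟨⟨h.left, t₂, ?_⟩, ?_⟩
    · dsimp
      rw [ht₂, hw]
    · ext
      · exact Category.id_comp _
      · exact ht₂

end
end
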